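/- Let d ≥ 1 be an integer and c ∈ ℝ with 1 + d·c > 0. Then for every measurable function g : ℝ^d → [0,∞], ∫_{ℝ^d} g(λ)·f_c(λ) dλ = ((2π)^{d/2}/K_d) · ∫_{ℝ^d} g(λ)·Δ(λ)·𝟙_O(λ)·ψ_{c;d}(λ) dλ, where ψ_{c;d} is the density of the centered Gaussian measure on ℝ^d with covariance matrix Θ_{c;d} := I_d + c·𝟏𝟏^⊤, i.e. ψ_{c;d}(x) = (2π)^{−d/2}(1+dc)^{−1/2}·exp(−x^⊤Θ_{c;d}^{−1}x/2). (Lemma 4.3: change of variables turning a GOI expectation into a Gaussian expectation.) -/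

import Mathlib

open MeasureTheory Filter Real

/-- `K_d := 2^{d/2} ∏_{j=1}^d Γ(j/2)`. -/
noncomputable def Kd (d : ℕ) : ℝ :=
  2 ^ ((d : ℝ) / 2) * ∏ j ∈ Finset.Icc 1 d, Real.Gamma ((j : ℝ) / 2)

/-- `Π(λ) := ∏_{j=1}^d |λ_j|`. -/
noncomputable def PiAbs (d : ℕ) (lam : Fin d → ℝ) : ℝ := ∏ j, |lam j|

/-- `Δ(λ) := ∏_{1 ≤ h < k ≤ d} |λ_h − λ_k|`. -/
noncomputable def DeltaV (d : ℕ) (lam : Fin d → ℝ) : ℝ :=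
  ∏ h : Fin d, ∏ k : Fin d, if h < k then |lam h - lam k| else 1

/-- The density of the ordered eigenvalues of a GOI(c) matrix. -/
noncomputable def fGOI (d : ℕ) (c : ℝ) (lam : Fin d → ℝ) : ℝ :=
  (Kd d * Real.sqrt (1 + d * c))⁻¹ * DeltaV d lam *
    Real.exp (-(∑ j, lam j ^ 2) / 2 + c * (∑ j, lam j) ^ 2 / (2 * (1 + d * c))) *
    Set.indicator {x : Fin d → ℝ | Monotone x} (fun _ => 1) lam


/-- `Θ_{c;d} := I_d + c·𝟏𝟏^⊤`. -/
noncomputable def ThetaM (d : ℕ) (c : ℝ) : Matrix (Fin d) (Fin d) ℝ :=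
  1 + c • Matrix.of (fun _ _ => (1 : ℝ))

/-- The density of the centered Gaussian measure on `ℝ^d` with covariance `Θ_{c;d}`:
`ψ_{c;d}(x) = (2π)^{−d/2}(1+dc)^{−1/2}·exp(−xᵀΘ_{c;d}⁻¹x/2)`. -/
noncomputable def psiG (d : ℕ) (c : ℝ) (x : Fin d → ℝ) : ℝ :=
  (2 * π) ^ (-(d : ℝ) / 2) * (1 + d * c) ^ (-(1 : ℝ) / 2) *
    Real.exp (-(dotProduct x ((ThetaM d c)⁻¹.mulVec x)) / 2)

lemma theta_inv (d : ℕ) (c : ℝ) (hc : 0 < 1 + (d:ℝ) * c) :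
    (ThetaM d c)⁻¹ = 1 - (c / (1 + d * c)) • Matrix.of (fun _ _ => (1 : ℝ)) := by
  have h0 : (1 + (d:ℝ) * c) ≠ 0 := ne_of_gt hc
  apply Matrix.inv_eq_right_inv
  ext i j
  simp only [ThetaM, Matrix.mul_apply, Matrix.add_apply, Matrix.sub_apply, Matrix.smul_apply,
    Matrix.one_apply, Matrix.of_apply, smul_eq_mul, mul_one, add_mul, mul_sub, mul_ite, mul_one,
    mul_zero, ite_mul, zero_mul, one_mul, Finset.sum_add_distrib, Finset.sum_sub_distrib,
    Finset.sum_ite_eq, Finset.sum_ite_eq', Finset.mem_univ, if_true, Finset.sum_const,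
    Finset.card_univ, Fintype.card_fin, nsmul_eq_mul]
  rcases eq_or_ne i j with h | h <;> simp [h] <;> field_simp [show (1 + c * (d:ℝ)) ≠ 0 by linarith] <;> ring

lemma theta_dot (d : ℕ) (c : ℝ) (hc : 0 < 1 + (d:ℝ) * c) (x : Fin d → ℝ) :
    dotProduct x ((ThetaM d c)⁻¹.mulVec x) =
      (∑ j, x j ^ 2) - c / (1 + d * c) * (∑ j, x j) ^ 2 := by
  rw [theta_inv d c hc]
  simp only [dotProduct, Matrix.mulVec, dotProduct, Matrix.sub_apply,
    Matrix.smul_apply, Matrix.one_apply, Matrix.of_apply, smul_eq_mul, mul_one, sub_mul,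
    ite_mul, one_mul, zero_mul, Finset.sum_sub_distrib, Finset.sum_ite_eq, Finset.mem_univ,
    if_true, mul_sub, Finset.mul_sum]
  congr 1
  · exact Finset.sum_congr rfl fun i _ => (sq (x i)).symm
  · simp only [sq, Finset.sum_mul, Finset.mul_sum]
    exact Finset.sum_congr rfl fun i _ => Finset.sum_congr rfl fun j _ => by ring

lemma Kd_pos (d : ℕ) : 0 < Kd d := by
  refine mul_pos (Real.rpow_pos_of_pos two_pos _) (Finset.prod_pos fun j hj => ?_)
  have h1 : 1 ≤ j := (Finset.mem_Icc.mp hj).1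
  have : (0:ℝ) < (j:ℝ) := by exact_mod_cast Nat.lt_of_lt_of_le Nat.zero_lt_one h1
  exact Real.Gamma_pos_of_pos (by linarith)

lemma aux_alg (K s A B Δ e t : ℝ) (h : A * B = 1) :
    (K * s)⁻¹ * Δ * e * t = A / K * (Δ * t * (B * s⁻¹ * e)) := by
  have h2 : A / K * (Δ * t * (B * s⁻¹ * e)) = (A * B) * (K⁻¹ * s⁻¹ * Δ * e * t) := by
    ring
  rw [h2, h, one_mul, mul_inv]

lemma fGOI_eq (d : ℕ) (c : ℝ) (hc : 0 < 1 + (d:ℝ) * c) (lam : Fin d → ℝ) :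
    fGOI d c lam = ((2 * π) ^ ((d : ℝ) / 2) / Kd d) *
      (DeltaV d lam * Set.indicator {x : Fin d → ℝ | Monotone x} (fun _ => 1) lam *
        psiG d c lam) := by
  have h0 : (1 + (d:ℝ) * c) ≠ 0 := ne_of_gt hc
  have h2π : (0:ℝ) < 2 * π := by positivity
  unfold fGOI psiG
  rw [theta_dot d c hc]
  have hexp : -((∑ j, lam j ^ 2) - c / (1 + (d:ℝ) * c) * (∑ j, lam j) ^ 2) / 2
      = -(∑ j, lam j ^ 2) / 2 + c * (∑ j, lam j) ^ 2 / (2 * (1 + (d:ℝ) * c)) := by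
    field_simp; ring
  rw [hexp]
  have hpow : (2 * π) ^ ((d : ℝ) / 2) * (2 * π) ^ (-(d : ℝ) / 2) = 1 := by
    rw [← Real.rpow_add h2π, show (d:ℝ)/2 + -(d:ℝ)/2 = 0 by ring, Real.rpow_zero]
  have hsq : ((1 : ℝ) + d * c) ^ (-(1 : ℝ) / 2) = (Real.sqrt (1 + d * c))⁻¹ := by
    rw [Real.sqrt_eq_rpow, ← Real.rpow_neg hc.le]
    norm_num
  rw [hsq]
  exact aux_alg _ _ _ _ _ _ _ hpow

/-- Lemma 4.3: change of variables turning a GOI expectation into a Gaussian expectation. -/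
theorem statement7 (d : ℕ) (hd : 1 ≤ d) (c : ℝ) (hc : 0 < 1 + (d : ℝ) * c)
    (g : (Fin d → ℝ) → ENNReal) (hg : Measurable g) :
    ∫⁻ lam : Fin d → ℝ, g lam * ENNReal.ofReal (fGOI d c lam) =
      ENNReal.ofReal ((2 * π) ^ ((d : ℝ) / 2) / Kd d) *
        ∫⁻ lam : Fin d → ℝ, g lam * ENNReal.ofReal (DeltaV d lam *
          Set.indicator {x : Fin d → ℝ | Monotone x} (fun _ => 1) lam * psiG d c lam) := by
  have hC : (0:ℝ) ≤ (2 * π) ^ ((d : ℝ) / 2) / Kd d := by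
    have := Kd_pos d
    positivity
  rw [← lintegral_const_mul' _ _ ENNReal.ofReal_ne_top]
  refine lintegral_congr fun lam => ?_
  rw [fGOI_eq d c hc lam, ENNReal.ofReal_mul hC]
  ring
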